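/- In a complete weight-graded left-unital pre-Lie algebra, the identity a ⊚ (1+b; (1+b)⋆c) = (a ⊚ (1+b)) ⋆ c holds, where a ⊚ (1+b; c) := Σ_{n≥0} (1/n!) {a; b,…,b, c} (n copies of b). -/

import Mathlib

open Finset

/-- The weight-`i` component of an element of a complete weight-graded space
`A = ∏_{n} A^{(n)}`, encoded as a dependent function. -/
def wtComp {M : ℕ → Type*} [∀ n, AddCommGroup (M n)] (i : ℕ) (f : ∀ n, M n) :
    ∀ n, M n :=
  fun m => if m = i then f m else 0

/-- A complete weight-graded algebra `A ≅ ∏_{n≥0} A^{(n)}` over `K`, with a bilinear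
product `⋆` such that `A^{(n)} ⋆ A^{(m)} ⊆ A^{(n+m)}`, and a unit `1 ∈ A^{(0)}`.
The underlying space is `∀ n, M n`, i.e. the product of the weight components. -/
structure CompleteGradedAlg (K : Type*) [Field K] (M : ℕ → Type*)
    [∀ n, AddCommGroup (M n)] [∀ n, Module K (M n)] where
  star : (∀ n, M n) → (∀ n, M n) → (∀ n, M n)
  one : ∀ n, M n
  add_left : ∀ f g h, star (f + g) h = star f h + star g h
  add_right : ∀ f g h, star f (g + h) = star f g + star f h
  smul_left : ∀ (c : K) f g, star (c • f) g = c • star f g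
  smul_right : ∀ (c : K) f g, star f (c • g) = c • star f g
  /-- the product is determined by its values on weight components (completeness) -/
  grade : ∀ f g n, star f g n =
    ∑ p ∈ Finset.HasAntidiagonal.antidiagonal n, star (wtComp p.1 f) (wtComp p.2 g) n
  /-- `A^{(i)} ⋆ A^{(j)} ⊆ A^{(i+j)}` -/
  wt : ∀ f g i j n, n ≠ i + j → star (wtComp i f) (wtComp j g) n = 0
  /-- the unit is concentrated in weight `0` -/
  one_wt : ∀ n, n ≠ 0 → one n = 0

namespace CompleteGradedAlg

variable {K : Type*} [Field K] {M : ℕ → Type*}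
  [∀ n, AddCommGroup (M n)] [∀ n, Module K (M n)]

variable (S : CompleteGradedAlg K M)

/-- Right-iterated powers with base `a`: `powPos a k = a^{⋆(k+1)} = (⋯(a⋆a)⋆⋯)⋆a`. -/
def powPos (a : ∀ n, M n) : ℕ → ∀ n, M n
  | 0 => a
  | k + 1 => S.star (powPos a k) a

/-- The exponential `e^λ = 1 + λ + λ^{⋆2}/2! + ⋯` of an element `λ` of positive weight;
its weight-`n` component is the (finite) sum of the weight-`n` components of the terms. -/
def expS (l : ∀ n, M n) : ∀ n, M n :=
  fun n => S.one n + ∑ k ∈ Finset.range n, ((Nat.factorial (k + 1) : K)⁻¹) • S.powPos l k n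

/-- The logarithm `ln(1+a) = a - a^{⋆2}/2 + a^{⋆3}/3 - ⋯` of a group-like element `1+a`. -/
def logS (f : ∀ n, M n) : ∀ n, M n :=
  fun n => ∑ k ∈ Finset.range n,
    (((-1 : K) ^ k) / (k + 1 : K)) • S.powPos (f - S.one) k n

/-- The symmetric brace operations `{a; b₁, …, bₙ}` of a pre-Lie algebra, defined
recursively by `{a;} = a`, `{a; b₁} = a ⋆ b₁` and
`{a; b₁,…,bₙ} = {{a; b₁,…,b_{n-1}}; bₙ} - Σᵢ {a; b₁,…,{bᵢ; bₙ},…,b_{n-1}}`.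
Here the head of the list plays the role of the last argument `bₙ`. -/
def brace : (∀ n, M n) → List (∀ n, M n) → ∀ n, M n
  | a, [] => a
  | a, c :: l => S.star (brace a l) c -
      ∑ i ∈ Finset.range l.length, brace a (l.set i (S.star (l.getD i a) c))
  termination_by _ bs => bs.length
  decreasing_by all_goals simp [List.length_set]

/-- The circle product `a ⊚ (1+b) := Σ_{k≥0} (1/k!) {a; b,…,b}` (sum of symmetric
braces); `b` is the reduced (positive-weight) part of the group-like second argument. -/
def circOne (a b : ∀ n, M n) : ∀ n, M n :=
  fun n => ∑ k ∈ Finset.range (n + 1),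
    ((Nat.factorial k : K)⁻¹) • S.brace a (List.replicate k b) n

/-- The circle product of `a` with a group-like element `x`. -/
def circG (a x : ∀ n, M n) : ∀ n, M n := S.circOne a (x - S.one)

end CompleteGradedAlg

/-- The mixed circle product `a ⊚ (1+b; c) := Σ_{k≥0} (1/k!){a; b,…,b, c}`
(`k` copies of `b` and one extra argument `c`). -/
def CompleteGradedAlg.circMix {K : Type*} [Field K]
    {M : ℕ → Type*} [∀ n, AddCommGroup (M n)] [∀ n, Module K (M n)]
    (S : CompleteGradedAlg K M) (a b c : ∀ n, M n) : ∀ n, M n :=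
  fun n => ∑ k ∈ Finset.range (n + 1),
    ((Nat.factorial k : K)⁻¹) • S.brace a (c :: List.replicate k b) n
theorem myGetD_set_self {α : Type*} (l : List α) (i : ℕ) (v d : α) (h : i < l.length) :
    (l.set i v).getD i d = v := by
  rw [List.getD_eq_getElem?_getD, List.getElem?_set_self', List.getElem?_eq_getElem h]
  rfl

theorem myGetD_set_ne {α : Type*} (l : List α) {i m : ℕ} (v d : α) (h : m ≠ i) :
    (l.set i v).getD m d = l.getD m d := by
  rw [List.getD_eq_getElem?_getD, List.getElem?_set_ne (Ne.symm h), List.getD_eq_getElem?_getD]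
namespace CompleteGradedAlg
variable {K : Type*} [Field K] {M : ℕ → Type*}
  [∀ n, AddCommGroup (M n)] [∀ n, Module K (M n)]
variable (S : CompleteGradedAlg K M)

theorem brace_cons (a h : ∀ n, M n) (l : List (∀ n, M n)) :
    S.brace a (h :: l) = S.star (S.brace a l) h -
      ∑ i ∈ Finset.range l.length, S.brace a (l.set i (S.star (l.getD i a) h)) := by
  rw [brace]

theorem star_zero_left (g : ∀ n, M n) : S.star 0 g = 0 := by
  have := S.add_left 0 0 g
  simpa using this

theorem star_zero_right (f : ∀ n, M n) : S.star f 0 = 0 := by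
  have := S.add_right f 0 0
  simpa using this

theorem star_sub_left (f g h : ∀ n, M n) : S.star (f - g) h = S.star f h - S.star g h := by
  have := S.add_left (f - g) g h
  rw [sub_add_cancel] at this
  rw [this]; abel

theorem star_sub_right (f g h : ∀ n, M n) : S.star f (g - h) = S.star f g - S.star f h := by
  have := S.add_right f (g - h) h
  rw [sub_add_cancel] at this
  rw [this]; abel

theorem star_sum_left {ι : Type*} (s : Finset ι) (f : ι → ∀ n, M n) (g : ∀ n, M n) :
    S.star (∑ i ∈ s, f i) g = ∑ i ∈ s, S.star (f i) g := by
  classical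
  induction s using Finset.induction_on with
  | empty => simp [S.star_zero_left]
  | insert _ _ h ih => rw [Finset.sum_insert h, S.add_left, ih, Finset.sum_insert h]

end CompleteGradedAlg
namespace CompleteGradedAlg
variable {K : Type*} [Field K] {M : ℕ → Type*}
  [∀ n, AddCommGroup (M n)] [∀ n, Module K (M n)]
variable (S : CompleteGradedAlg K M)

/-- `f` vanishes in weights below `m`. -/
def Van (m : ℕ) (f : ∀ n, M n) : Prop := ∀ p, p < m → f p = 0

theorem wtComp_eq_zero {f : ∀ n, M n} {i : ℕ} (h : f i = 0) : wtComp i f = 0 := by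
  funext m
  simp only [wtComp]
  split
  · next he => subst he; exact h
  · rfl

theorem star_van {f g : ∀ n, M n} {i j : ℕ} (hf : Van i f) (hg : Van j g) :
    Van (i + j) (S.star f g) := by
  intro n hn
  rw [S.grade]
  apply Finset.sum_eq_zero
  rintro ⟨p, q⟩ hpq
  rw [Finset.HasAntidiagonal.mem_antidiagonal] at hpq
  rcases lt_or_ge p i with hp | hp
  · rw [wtComp_eq_zero (hf p hp), S.star_zero_left]; rfl
  · have hq : q < j := by omega
    rw [wtComp_eq_zero (hg q hq), S.star_zero_right]; rfl

theorem sum_set_nat (ws : List ℕ) (i : ℕ) (v : ℕ) (h : i < ws.length) :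
    (ws.set i v).sum + ws.getD i 0 = ws.sum + v := by
  induction ws generalizing i with
  | nil => simp at h
  | cons w t ih =>
    cases i with
    | zero => simp [List.set]; omega
    | succ i =>
      simp only [List.set, List.sum_cons, List.getD_cons_succ]
      have := ih i (by simpa using h)
      omega

theorem brace_van (a : ∀ n, M n) : ∀ N (l : List (∀ n, M n)) (ws : List ℕ),
    l.length = N → ws.length = N →
    (∀ i, i < N → Van (ws.getD i 0) (l.getD i a)) →
    Van ws.sum (S.brace a l) := by
  intro N
  induction N with
  | zero =>
    rintro l ws hl hw _
    rw [List.length_eq_zero_iff] at hl hw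
    subst hl; subst hw
    intro p hp; simp at hp
  | succ N ih =>
    rintro l ws hl hw hvan
    match l, ws with
    | h :: t, w :: vs =>
      simp only [List.length_cons, Nat.succ.injEq] at hl hw
      rw [S.brace_cons]
      have hvt : ∀ i, i < N → Van (vs.getD i 0) (t.getD i a) := by
        intro i hi
        have := hvan (i+1) (by omega)
        simpa using this
      have hvh : Van w h := by
        have := hvan 0 (by omega); simpa using this
      have h1 : Van (w :: vs).sum (S.star (S.brace a t) h) := by
        have := S.star_van (ih t vs hl hw hvt) hvh
        simpa [Nat.add_comm] using this
      intro p hp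
      have h2 : ∀ i, i ∈ Finset.range t.length →
          S.brace a (t.set i (S.star (t.getD i a) h)) p = 0 := by
        intro i hi
        rw [Finset.mem_range] at hi
        have hiN : i < N := by omega
        apply ih (t.set i (S.star (t.getD i a) h)) (vs.set i (vs.getD i 0 + w))
          (by simp [hl]) (by simp [hw])
        · intro m hm
          by_cases hmi : m = i
          · subst hmi
            rw [myGetD_set_self _ _ _ _ (by omega), myGetD_set_self _ _ _ _ (by omega)]
            exact S.star_van (hvt m hiN) hvh
          · rw [myGetD_set_ne _ _ _ hmi, myGetD_set_ne _ _ _ hmi]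
            exact hvt m hm
        · have := sum_set_nat vs i (vs.getD i 0 + w) (by omega)
          simp only [List.sum_cons] at hp ⊢
          omega
      simp only [Pi.sub_apply, h1 p hp, Finset.sum_apply, Finset.sum_eq_zero h2, sub_zero]

end CompleteGradedAlg
namespace CompleteGradedAlg
variable {K : Type*} [Field K] {M : ℕ → Type*}
  [∀ n, AddCommGroup (M n)] [∀ n, Module K (M n)]
variable (S : CompleteGradedAlg K M)

theorem brace_set_add (a : ∀ n, M n) : ∀ N (l : List (∀ n, M n)) (i : ℕ) (x y : ∀ n, M n),
    l.length = N → i < N →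
    S.brace a (l.set i (x + y)) = S.brace a (l.set i x) + S.brace a (l.set i y) := by
  intro N
  induction N with
  | zero => intro l i x y _ hi; omega
  | succ N ih =>
    rintro (_ | ⟨h, t⟩) i x y hl hi
    · simp at hl
    simp only [List.length_cons, Nat.succ.injEq] at hl
    cases i with
    | zero =>
      show S.brace a ((x + y) :: t) = S.brace a (x :: t) + S.brace a (y :: t)
      rw [S.brace_cons, S.brace_cons, S.brace_cons, S.add_right]
      have hterm : ∀ j ∈ Finset.range t.length,
          S.brace a (t.set j (S.star (t.getD j a) (x + y))) =
          S.brace a (t.set j (S.star (t.getD j a) x)) +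
          S.brace a (t.set j (S.star (t.getD j a) y)) := by
        intro j hj
        rw [Finset.mem_range] at hj
        rw [S.add_right]
        exact ih t j _ _ hl (by omega)
      rw [Finset.sum_congr rfl hterm, Finset.sum_add_distrib]
      abel
    | succ j =>
      have hjN : j < N := by omega
      show S.brace a (h :: t.set j (x + y)) =
        S.brace a (h :: t.set j x) + S.brace a (h :: t.set j y)
      rw [S.brace_cons, S.brace_cons, S.brace_cons]
      rw [ih t j x y hl hjN, S.add_left]
      simp only [List.length_set]
      have hterm : ∀ m ∈ Finset.range t.length,
          S.brace a ((t.set j (x+y)).set m (S.star ((t.set j (x+y)).getD m a) h)) =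
          S.brace a ((t.set j x).set m (S.star ((t.set j x).getD m a) h)) +
          S.brace a ((t.set j y).set m (S.star ((t.set j y).getD m a) h)) := by
        intro m hm
        rw [Finset.mem_range] at hm
        by_cases hmj : m = j
        · subst hmj
          rw [myGetD_set_self _ _ _ _ (by omega), myGetD_set_self _ _ _ _ (by omega),
            myGetD_set_self _ _ _ _ (by omega)]
          rw [List.set_set, List.set_set, List.set_set, S.add_left]
          exact ih t m _ _ hl (by omega)
        · rw [myGetD_set_ne _ _ _ hmj, myGetD_set_ne _ _ _ hmj, myGetD_set_ne _ _ _ hmj]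
          rw [List.set_comm _ _ (Ne.symm hmj), List.set_comm _ _ (Ne.symm hmj), List.set_comm _ _ (Ne.symm hmj)]
          exact ih (t.set m (S.star (t.getD m a) h)) j x y (by simp [hl]) hjN
      rw [Finset.sum_congr rfl hterm, Finset.sum_add_distrib]
      abel

end CompleteGradedAlg
namespace CompleteGradedAlg
variable {K : Type*} [Field K] {M : ℕ → Type*}
  [∀ n, AddCommGroup (M n)] [∀ n, Module K (M n)]
variable (S : CompleteGradedAlg K M)

theorem brace_expand_two (a : ∀ n, M n) (t : List (∀ n, M n)) (u v : ∀ n, M n) :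
    S.brace a (u :: v :: t) =
    S.star (S.star (S.brace a t) v) u
    - S.star (S.brace a t) (S.star v u)
    - ∑ j ∈ Finset.range t.length,
        S.star (S.brace a (t.set j (S.star (t.getD j a) v))) u
    - ∑ i ∈ Finset.range t.length,
        S.star (S.brace a (t.set i (S.star (t.getD i a) u))) v
    + ∑ j ∈ Finset.range t.length,
        S.brace a (t.set j (S.star (t.getD j a) (S.star v u)))
    + ∑ i ∈ Finset.range t.length,
        S.brace a (t.set i (S.star (S.star (t.getD i a) u) v))
    + ∑ i ∈ Finset.range t.length, ∑ m ∈ (Finset.range t.length).erase i,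
        S.brace a ((t.set i (S.star (t.getD i a) u)).set m (S.star (t.getD m a) v)) := by
  rw [S.brace_cons a u (v :: t), S.brace_cons a v t, S.star_sub_left, S.star_sum_left]
  have hlen : (v :: t).length = t.length + 1 := rfl
  rw [hlen, Finset.sum_range_succ']
  simp only [List.set_cons_succ, List.getD_cons_succ, List.getD_cons_zero]
  show _ = _
  rw [show (v :: t).set 0 (S.star v u) = S.star v u :: t from rfl]
  rw [S.brace_cons a (S.star v u) t]
  have hinner : ∀ i ∈ Finset.range t.length,
      S.brace a (v :: t.set i (S.star (t.getD i a) u)) =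
      S.star (S.brace a (t.set i (S.star (t.getD i a) u))) v
      - (∑ m ∈ (Finset.range t.length).erase i,
          S.brace a ((t.set i (S.star (t.getD i a) u)).set m (S.star (t.getD m a) v))
         + S.brace a (t.set i (S.star (S.star (t.getD i a) u) v))) := by
    intro i hi
    have hi' := Finset.mem_range.mp hi
    rw [S.brace_cons]
    congr 1
    rw [List.length_set]
    rw [← Finset.sum_erase_add _ _ hi]
    congr 1
    · apply Finset.sum_congr rfl
      intro m hm
      have hmi : m ≠ i := (Finset.mem_erase.mp hm).1
      rw [myGetD_set_ne _ _ _ hmi]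
    · rw [List.set_set, myGetD_set_self _ _ _ _ hi']
  rw [Finset.sum_congr rfl hinner, Finset.sum_sub_distrib, Finset.sum_add_distrib]
  abel

end CompleteGradedAlg
namespace CompleteGradedAlg
variable {K : Type*} [Field K] {M : ℕ → Type*}
  [∀ n, AddCommGroup (M n)] [∀ n, Module K (M n)]
variable (S : CompleteGradedAlg K M)

theorem brace_swap_head (a : ∀ n, M n)
    (hPreLie : ∀ x y z, S.star (S.star x y) z - S.star x (S.star y z) =
      S.star (S.star x z) y - S.star x (S.star z y))
    (x y : ∀ n, M n) (t : List (∀ n, M n)) :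
    S.brace a (x :: y :: t) = S.brace a (y :: x :: t) := by
  rw [S.brace_expand_two a t x y, S.brace_expand_two a t y x]
  set F := S.brace a t with hF
  set n := t.length with hn
  have h1 : S.star (S.star F y) x - S.star F (S.star y x)
      = S.star (S.star F x) y - S.star F (S.star x y) := hPreLie F y x
  have h3 : (∑ j ∈ Finset.range n, S.brace a (t.set j (S.star (t.getD j a) (S.star y x))))
      + ∑ i ∈ Finset.range n, S.brace a (t.set i (S.star (S.star (t.getD i a) x) y))
      = (∑ j ∈ Finset.range n, S.brace a (t.set j (S.star (t.getD j a) (S.star x y))))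
      + ∑ i ∈ Finset.range n, S.brace a (t.set i (S.star (S.star (t.getD i a) y) x)) := by
    rw [← Finset.sum_add_distrib, ← Finset.sum_add_distrib]
    apply Finset.sum_congr rfl
    intro j hj
    have hj' := Finset.mem_range.mp hj
    rw [← S.brace_set_add a n t j _ _ hn.symm hj', ← S.brace_set_add a n t j _ _ hn.symm hj']
    have h' := sub_eq_sub_iff_add_eq_add.mp (hPreLie (t.getD j a) x y)
    have hslot : S.star (t.getD j a) (S.star y x) + S.star (S.star (t.getD j a) x) y
        = S.star (t.getD j a) (S.star x y) + S.star (S.star (t.getD j a) y) x := by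
      abel_nf at h' ⊢
      exact h'
    exact congrArg (fun z => S.brace a (t.set j z)) hslot
  have h4 : (∑ i ∈ Finset.range n, ∑ m ∈ (Finset.range n).erase i,
        S.brace a ((t.set i (S.star (t.getD i a) x)).set m (S.star (t.getD m a) y)))
      = ∑ i ∈ Finset.range n, ∑ m ∈ (Finset.range n).erase i,
        S.brace a ((t.set i (S.star (t.getD i a) y)).set m (S.star (t.getD m a) x)) := by
    rw [Finset.sum_sigma', Finset.sum_sigma']
    apply Finset.sum_nbij' (i := fun p => (⟨p.2, p.1⟩ : (_ : ℕ) × ℕ))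
      (j := fun p => (⟨p.2, p.1⟩ : (_ : ℕ) × ℕ))
    · rintro ⟨i, m⟩ hp
      simp only [Finset.mem_sigma, Finset.mem_erase, Finset.mem_range] at hp ⊢
      exact ⟨hp.2.2, Ne.symm hp.2.1, hp.1⟩
    · rintro ⟨i, m⟩ hp
      simp only [Finset.mem_sigma, Finset.mem_erase, Finset.mem_range] at hp ⊢
      exact ⟨hp.2.2, Ne.symm hp.2.1, hp.1⟩
    · rintro ⟨i, m⟩ _; rfl
    · rintro ⟨i, m⟩ _; rfl
    · rintro ⟨i, m⟩ hp
      simp only [Finset.mem_sigma, Finset.mem_erase, Finset.mem_range] at hp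
      have hmi : m ≠ i := hp.2.1
      exact congrArg (S.brace a) (List.set_comm _ _ (Ne.symm hmi))
  rw [h4]
  have hmid : (∑ j ∈ Finset.range n, S.star (S.brace a (t.set j (S.star (t.getD j a) y))) x)
      + ∑ i ∈ Finset.range n, S.star (S.brace a (t.set i (S.star (t.getD i a) x))) y
      = (∑ j ∈ Finset.range n, S.star (S.brace a (t.set j (S.star (t.getD j a) x))) y)
      + ∑ i ∈ Finset.range n, S.star (S.brace a (t.set i (S.star (t.getD i a) y))) x :=
    add_comm _ _
  have hmid' := congrArg (fun z => -z) hmid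
  have hsum0 := congrArg₂ (· + ·) (congrArg₂ (· + ·) h1 h3) hmid'
  have hsum := congrArg₂ (· + ·) hsum0
    (rfl : (∑ i ∈ Finset.range n, ∑ m ∈ (Finset.range n).erase i,
      S.brace a ((t.set i (S.star (t.getD i a) y)).set m (S.star (t.getD m a) x))) = _)
  abel_nf at hsum ⊢
  exact hsum

end CompleteGradedAlg
namespace CompleteGradedAlg
variable {K : Type*} [Field K] {M : ℕ → Type*}
  [∀ n, AddCommGroup (M n)] [∀ n, Module K (M n)]
variable (S : CompleteGradedAlg K M)

theorem brace_swap (a : ∀ n, M n)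
    (hPreLie : ∀ x y z, S.star (S.star x y) z - S.star x (S.star y z) =
      S.star (S.star x z) y - S.star x (S.star z y)) :
    ∀ N (l₁ : List (∀ n, M n)) (x y : ∀ n, M n) (l₂ : List (∀ n, M n)),
    l₁.length = N →
    S.brace a (l₁ ++ x :: y :: l₂) = S.brace a (l₁ ++ y :: x :: l₂) := by
  intro N
  induction N with
  | zero =>
    rintro l₁ x y l₂ hl
    rw [List.length_eq_zero_iff] at hl
    subst hl
    exact S.brace_swap_head a hPreLie x y l₂
  | succ N ih =>
    rintro (_ | ⟨h, l'⟩) x y l₂ hl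
    · simp at hl
    simp only [List.length_cons, Nat.succ.injEq] at hl
    rw [List.cons_append, List.cons_append, S.brace_cons, S.brace_cons]
    rw [ih l' x y l₂ hl]
    congr 1
    have hllen : (l' ++ x :: y :: l₂).length = (l' ++ y :: x :: l₂).length := by simp
    apply Finset.sum_nbij' (i := fun m => if m = l'.length then l'.length + 1
        else if m = l'.length + 1 then l'.length else m)
      (j := fun m => if m = l'.length then l'.length + 1
        else if m = l'.length + 1 then l'.length else m)
    · intro m hm
      simp only [Finset.mem_range, List.length_append, List.length_cons] at hm ⊢
      split
      · omega
      · split <;> omega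
    · intro m hm
      simp only [Finset.mem_range, List.length_append, List.length_cons] at hm ⊢
      split
      · omega
      · split <;> omega
    · intro m hm
      split
      · next h1 => rw [if_neg (by omega), if_pos rfl]; omega
      · next h1 =>
        split
        · next h2 => rw [if_pos rfl]; omega
        · next h2 => rfl
    · intro m hm
      split
      · next h1 => rw [if_neg (by omega), if_pos rfl]; omega
      · next h1 =>
        split
        · next h2 => rw [if_pos rfl]; omega
        · next h2 => rfl
    · intro m hm
      simp only [Finset.mem_range, List.length_append, List.length_cons] at hm
      rcases lt_trichotomy m l'.length with hlt | heq | hgt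
      · -- position inside l'
        rw [if_neg (by omega), if_neg (by omega)]
        rw [List.getD_append _ _ _ _ hlt, List.getD_append _ _ _ _ hlt,
          List.set_append_left _ _ hlt, List.set_append_left _ _ hlt]
        exact ih (l'.set m (S.star (l'.getD m a) h)) x y l₂ (by simp [hl])
      · -- position of x
        subst heq
        rw [if_pos rfl]
        rw [List.getD_append_right _ _ _ _ le_rfl, List.getD_append_right _ _ _ _ (by omega)]
        simp only [Nat.sub_self, List.getD_cons_zero, show l'.length + 1 - l'.length = 1 from by omega,
          List.getD_cons_succ]
        rw [List.set_append_right _ _ le_rfl, List.set_append_right _ _ (by omega)]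
        simp only [Nat.sub_self, List.set_cons_zero,
          show l'.length + 1 - l'.length = 1 from by omega, List.set_cons_succ]
        exact ih l' (S.star x h) y l₂ hl
      · rcases Nat.eq_or_lt_of_le (Nat.succ_le_of_lt hgt) with heq1 | hgt1
        · -- position of y
          subst heq1
          rw [if_neg (by omega), if_pos rfl]
          rw [List.getD_append_right _ _ _ _ (by omega), List.getD_append_right _ _ _ _ le_rfl]
          simp only [show l'.length + 1 - l'.length = 1 from by omega, Nat.sub_self,
            List.getD_cons_succ, List.getD_cons_zero]
          rw [List.set_append_right _ _ (by omega), List.set_append_right _ _ le_rfl]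
          simp only [show l'.length + 1 - l'.length = 1 from by omega, Nat.sub_self,
            List.set_cons_succ, List.set_cons_zero]
          exact ih l' x (S.star y h) l₂ hl
        · -- position inside l₂
          rw [if_neg (by omega), if_neg (by omega)]
          rw [List.getD_append_right _ _ _ _ (by omega), List.getD_append_right _ _ _ _ (by omega)]
          have h2 : m - l'.length = (m - l'.length - 2) + 2 := by omega
          rw [h2]
          simp only [List.getD_cons_succ]
          rw [List.set_append_right _ _ (by omega), List.set_append_right _ _ (by omega), h2]
          simp only [List.set_cons_succ]
          exact ih l' x y (l₂.set (m - l'.length - 2) (S.star (l₂.getD (m - l'.length - 2) a) h)) hl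

end CompleteGradedAlg
theorem myGetD_replicate {α : Type*} (b d : α) {k i : ℕ} (h : i < k) :
    (List.replicate k b).getD i d = b := by
  rw [List.getD_eq_getElem?_getD, List.getElem?_eq_getElem (by simpa using h)]
  simp

theorem mySet_replicate {α : Type*} (b x : α) : ∀ i k, i < k →
    (List.replicate k b).set i x =
      List.replicate i b ++ x :: List.replicate (k - 1 - i) b := by
  intro i
  induction i with
  | zero =>
    intro k hk
    match k with
    | k + 1 => simp [List.replicate_succ]
  | succ i ih =>
    intro k hk
    match k with
    | k + 1 =>
      rw [List.replicate_succ]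
      show b :: (List.replicate k b).set i x = _
      rw [ih k (by omega)]
      simp [List.replicate_succ]
      omega

namespace CompleteGradedAlg
variable {K : Type*} [Field K] {M : ℕ → Type*}
  [∀ n, AddCommGroup (M n)] [∀ n, Module K (M n)]
variable (S : CompleteGradedAlg K M)

theorem brace_set_replicate (a : ∀ n, M n)
    (hPreLie : ∀ x y z, S.star (S.star x y) z - S.star x (S.star y z) =
      S.star (S.star x z) y - S.star x (S.star z y))
    (b x : ∀ n, M n) : ∀ i k, i < k →
    S.brace a ((List.replicate k b).set i x) =
      S.brace a (x :: List.replicate (k - 1) b) := by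
  intro i
  induction i with
  | zero =>
    intro k hk
    rw [mySet_replicate b x 0 k hk]
    simp
  | succ i ih =>
    intro k hk
    rw [mySet_replicate b x (i+1) k hk]
    have h1 : List.replicate (i+1) b ++ x :: List.replicate (k - 1 - (i+1)) b
        = List.replicate i b ++ b :: x :: List.replicate (k - 1 - (i+1)) b := by
      rw [List.replicate_succ' (n := i) (a := b)]
      simp
    rw [h1, S.brace_swap a hPreLie i.succ.pred (List.replicate i b) b x _ (by simp)]
    have h2 : List.replicate i b ++ x :: b :: List.replicate (k - 1 - (i+1)) b
        = (List.replicate k b).set i x := by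
      rw [mySet_replicate b x i k (by omega)]
      have : k - 1 - i = (k - 1 - (i+1)) + 1 := by omega
      rw [this, List.replicate_succ]
    rw [h2, ih k (by omega)]

end CompleteGradedAlg
namespace CompleteGradedAlg
variable {K : Type*} [Field K] {M : ℕ → Type*}
  [∀ n, AddCommGroup (M n)] [∀ n, Module K (M n)]
variable (S : CompleteGradedAlg K M)

theorem brace_van_len (a : ∀ n, M n) (l : List (∀ n, M n))
    (hl : ∀ z ∈ l, z 0 = 0) : ∀ p < l.length, S.brace a l p = 0 := by
  intro p hp
  have := S.brace_van a l.length l (List.replicate l.length 1) rfl (by simp) ?_ p ?_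
  · exact this
  · intro i hi
    rw [myGetD_replicate _ _ hi]
    intro q hq
    have hq0 : q = 0 := by omega
    subst hq0
    apply hl
    rw [List.getD_eq_getElem _ _ hi]
    exact List.getElem_mem _
  · simpa using hp

theorem star_left_congr (f f' g : ∀ n, M n) (n : ℕ)
    (h : ∀ p, p ≤ n → f p = f' p) : S.star f g n = S.star f' g n := by
  rw [S.grade, S.grade]
  apply Finset.sum_congr rfl
  rintro ⟨p, q⟩ hpq
  rw [Finset.HasAntidiagonal.mem_antidiagonal] at hpq
  have hfp : wtComp p f = wtComp p f' := by
    funext m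
    simp only [wtComp]
    split
    · next hm => subst hm; exact h m (by omega)
    · rfl
  rw [hfp]

theorem brace_cons_replicate (a : ∀ n, M n)
    (hPreLie : ∀ x y z, S.star (S.star x y) z - S.star x (S.star y z) =
      S.star (S.star x z) y - S.star x (S.star z y))
    (b w : ∀ n, M n) (k : ℕ) :
    S.brace a (w :: List.replicate k b) =
      S.star (S.brace a (List.replicate k b)) w
      - k • S.brace a (S.star b w :: List.replicate (k-1) b) := by
  rw [S.brace_cons]
  congr 1
  rw [List.length_replicate]
  have : ∀ i ∈ Finset.range k,
      S.brace a ((List.replicate k b).set i (S.star ((List.replicate k b).getD i a) w))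
      = S.brace a (S.star b w :: List.replicate (k-1) b) := by
    intro i hi
    rw [Finset.mem_range] at hi
    rw [myGetD_replicate _ _ hi, S.brace_set_replicate a hPreLie b _ i k hi]
  rw [Finset.sum_congr rfl this, Finset.sum_const, Finset.card_range]

end CompleteGradedAlg

/-- In a complete weight-graded left-unital pre-Lie algebra (over a
field of characteristic zero), for `b, c` of trivial weight-0 component one has
`a ⊚ (1+b; (1+b)⋆c) = (a ⊚ (1+b)) ⋆ c`. -/
theorem circMix_identity {K : Type*} [Field K] [CharZero K]
    {M : ℕ → Type*} [∀ n, AddCommGroup (M n)] [∀ n, Module K (M n)]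
    (S : CompleteGradedAlg K M)
    (hPreLie : ∀ x y z, S.star (S.star x y) z - S.star x (S.star y z) =
      S.star (S.star x z) y - S.star x (S.star z y))
    (hUnitL : ∀ f, S.star S.one f = f)
    (a b c : ∀ n, M n) (hb : b 0 = 0) (hc : c 0 = 0) :
    S.circMix a b (S.star (S.one + b) c) = S.star (S.circOne a b) c := by
  classical
  have hC : S.star (S.one + b) c = c + S.star b c := by rw [S.add_left, hUnitL]
  set d := S.star b c with hd
  have hd0 : d 0 = 0 := by
    have hVd := S.star_van (f := b) (g := c) (i := 1) (j := 0)
      (fun p hp => Nat.lt_one_iff.mp hp ▸ hb) (fun p hp => absurd hp (Nat.not_lt_zero p))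
    exact hVd 0 (by omega)
  -- head additivity
  have hhead : ∀ (P Q : ∀ n, M n) (t : List (∀ n, M n)),
      S.brace a ((P + Q) :: t) = S.brace a (P :: t) + S.brace a (Q :: t) := by
    intro P Q t
    have h := S.brace_set_add a (t.length + 1) (P :: t) 0 P Q rfl (by omega)
    simpa using h
  -- key per-k identity
  have key : ∀ k : ℕ, S.brace a (S.star (S.one + b) c :: List.replicate k b)
      = S.star (S.brace a (List.replicate k b)) c
        + S.brace a (d :: List.replicate k b)
        - k • S.brace a (d :: List.replicate (k - 1) b) := by
    intro k
    rw [hC, hhead c d (List.replicate k b),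
      S.brace_cons_replicate a hPreLie b c k, ← hd]
    abel
  funext n
  -- vanishing of top term
  have hHtop : S.brace a (d :: List.replicate n b) n = 0 := by
    apply S.brace_van_len a (d :: List.replicate n b)
    · intro z hz
      rcases List.mem_cons.mp hz with h | h
      · rw [h]; exact hd0
      · rw [List.eq_of_mem_replicate h]; exact hb
    · simp
  have hFvan : ∀ k p : ℕ, p < k → S.brace a (List.replicate k b) p = 0 := by
    intro k p hp
    apply S.brace_van_len a (List.replicate k b)
    · intro z hz; rw [List.eq_of_mem_replicate hz]; exact hb
    · simpa using hp
  -- RHS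
  have hRHS : S.star (S.circOne a b) c n
      = ∑ k ∈ Finset.range (n + 1),
          ((k.factorial : K)⁻¹) • S.star (S.brace a (List.replicate k b)) c n := by
    rw [S.star_left_congr (S.circOne a b)
      (∑ k ∈ Finset.range (n + 1), ((k.factorial : K)⁻¹) • S.brace a (List.replicate k b)) c n ?_]
    · rw [S.star_sum_left]
      rw [Finset.sum_congr rfl (fun k _ => S.smul_left ((k.factorial : K)⁻¹)
        (S.brace a (List.replicate k b)) c)]
      rw [Finset.sum_apply]
      simp
    · intro p hp
      show S.circOne a b p = _
      rw [CompleteGradedAlg.circOne, Finset.sum_apply]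
      simp only [Pi.smul_apply]
      apply Finset.sum_subset
      · intro k hk
        rw [Finset.mem_range] at hk ⊢
        omega
      · intro k hk hks
        rw [Finset.mem_range] at hk
        rw [Finset.mem_range] at hks
        rw [hFvan k p (by omega), smul_zero]
  -- LHS
  show S.circMix a b (S.star (S.one + b) c) n = _
  rw [CompleteGradedAlg.circMix]
  rw [Finset.sum_congr rfl (fun k _ => by rw [key k])]
  simp only [Pi.add_apply, Pi.sub_apply, Pi.smul_apply, smul_add, smul_sub]
  rw [Finset.sum_sub_distrib, Finset.sum_add_distrib]
  rw [hRHS]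
  have hcancel : (∑ k ∈ Finset.range (n + 1),
        ((k.factorial : K)⁻¹) • S.brace a (d :: List.replicate k b) n)
      = ∑ k ∈ Finset.range (n + 1),
        ((k.factorial : K)⁻¹) • (k • S.brace a (d :: List.replicate (k - 1) b) n) := by
    rw [Finset.sum_range_succ, hHtop, smul_zero, add_zero]
    rw [Finset.sum_range_succ']
    simp only [zero_smul, smul_zero, add_zero]
    apply Finset.sum_congr rfl
    intro k hk
    have hne : ((k + 1 : ℕ) : K) ≠ 0 := Nat.cast_ne_zero.mpr (Nat.succ_ne_zero k)
    rw [Nat.add_sub_cancel]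
    rw [← Nat.cast_smul_eq_nsmul K (k + 1) (S.brace a (d :: List.replicate k b) n), smul_smul]
    congr 1
    rw [Nat.factorial_succ, Nat.cast_mul, mul_inv]
    push_cast
    rw [mul_comm ((k : K) + 1)⁻¹, mul_assoc, inv_mul_cancel₀ (by push_cast at hne; exact hne), mul_one]
  rw [hcancel]
  abel
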